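/- Let G = (V, E) be a finite connected graph. Construct the 2-column house allocation instance M_G whose houses are E ∪ V and whose applicants are, for each edge e = {u, v} ∈ E, two applicants with preference lists (e, u) and (e, v). Then: (1) every edge-house e ∈ E is in the image of every Pareto optimal matching of M_G; and (2) the complements within V of images of Pareto optimal matchings are exactly independent sets of G, i.e., for every Pareto optimal matching τ, the set V \ τ(A) is an independent set of G, and conversely every nonempty independent set W of G satisfies: E ∪ (V \ W) is the image of some Pareto optimal matching of M_G. -/

import Mathlib

/-- A 2-column house allocation instance: every applicant has a top house and
a (distinct) second house; only these two houses of its preference list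
matter. -/
structure TwoCol (A B : Type*) where
  h1 : A → B
  h2 : A → B
  distinct : ∀ a, h1 a ≠ h2 a

namespace TwoCol

variable {A B : Type*}

/-- A (partial) matching of a 2-column instance: each applicant receives
either its top house, its second house, or nothing, and no house is given to
two applicants. -/
def IsMatching (M : TwoCol A B) (τ : A → Option B) : Prop :=
  (∀ a b, τ a = some b → b = M.h1 a ∨ b = M.h2 a) ∧
    ∀ a a' b, τ a = some b → τ a' = some b → a = a'

/-- Applicant `a` strictly prefers outcome `x` to outcome `y`
(top house ≻ second house ≻ unassigned). -/
def PrefOpt (M : TwoCol A B) (a : A) (x y : Option B) : Prop :=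
  (x = some (M.h1 a) ∧ y ≠ some (M.h1 a)) ∨ (x = some (M.h2 a) ∧ y = none)

/-- `S` is a blocking coalition of `τ`. -/
def IsBlocking (M : TwoCol A B) (τ : A → Option B) (S : Set A) : Prop :=
  S.Nonempty ∧ ∃ τ' : A → Option B, M.IsMatching τ' ∧
    (∀ a ∉ S, τ' a = τ a) ∧ ∀ a ∈ S, M.PrefOpt a (τ' a) (τ a)

/-- `τ` is a Pareto optimal matching of the 2-column instance `M`. -/
def IsPOM (M : TwoCol A B) (τ : A → Option B) : Prop :=
  M.IsMatching τ ∧ ∀ S : Set A, ¬ M.IsBlocking τ S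

/-- The bipartite row-element graph of a 2-column instance: applicant `a` is
adjacent to house `b` iff `b` is one of `a`'s two listed houses. -/
def graph (M : TwoCol A B) : SimpleGraph (A ⊕ B) where
  Adj x y :=
    (∃ a b, x = Sum.inl a ∧ y = Sum.inr b ∧ (M.h1 a = b ∨ M.h2 a = b)) ∨
    (∃ a b, y = Sum.inl a ∧ x = Sum.inr b ∧ (M.h1 a = b ∨ M.h2 a = b))
  symm := by
    constructor
    rintro x y (⟨a, b, h1, h2, h3⟩ | ⟨a, b, h1, h2, h3⟩)
    · exact Or.inr ⟨a, b, h1, h2, h3⟩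
    · exact Or.inl ⟨a, b, h1, h2, h3⟩
  loopless := ⟨by rintro x (⟨a, b, rfl, h2, _⟩ | ⟨a, b, rfl, h2, _⟩) <;> simp at h2⟩

end TwoCol

/-- The 2-column instance `M_G` associated with a graph `G`: houses are the
edges and the vertices of `G`; for each edge `e` and each endpoint `u` of `e`
there is an applicant with preference list `(e, u)`. -/
def graphInstance {V : Type*} (G : SimpleGraph V) :
    TwoCol {p : Sym2 V × V // p.1 ∈ G.edgeSet ∧ p.2 ∈ p.1} (↥G.edgeSet ⊕ V) where
  h1 p := Sum.inl ⟨p.1.1, p.2.1⟩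
  h2 p := Sum.inr p.1.2
  distinct p := by simp


open SimpleGraph

namespace Stmt18Aux
open scoped Classical

variable {V : Type*}

/-- pick a neighbor strictly closer to `r`, if one exists. -/
noncomputable def par (G : SimpleGraph V) (r : V) (v : V) : V :=
  if h : ∃ u, G.Adj v u ∧ G.dist u r < G.dist v r then h.choose else v

lemma par_spec {G : SimpleGraph V} (hconn : G.Connected) {r v : V} (h : v ≠ r) :
    G.Adj v (par G r v) ∧ G.dist (par G r v) r < G.dist v r := by
  have hex : ∃ u, G.Adj v u ∧ G.dist u r < G.dist v r := by
    obtain ⟨q, hq⟩ := (hconn v r).exists_walk_length_eq_dist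
    have hpos : 0 < G.dist v r := hconn.pos_dist_of_ne h
    cases q with
    | nil => simp at hq; simp at hpos
    | cons hadj q =>
      refine ⟨_, hadj, ?_⟩
      have := G.dist_le q
      simp [SimpleGraph.Walk.length_cons] at hq
      omega
  rw [par, dif_pos hex]
  exact hex.choose_spec

/-- the applicant-vertex that receives the edge-house `e`. -/
noncomputable def holder (W : Set V) (p : V → V) (e : Sym2 V) : V :=
  if h : ∃ x, ∃ _ : x ∈ e, x ∉ W ∧ s(x, p x) = e then
    Sym2.Mem.other h.choose_spec.choose
  else if h2 : ∃ w, w ∈ e ∧ w ∈ W then h2.choose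
  else e.out.1

lemma holder_mem (W : Set V) (p : V → V) (e : Sym2 V) : holder W p e ∈ e := by
  rw [holder]
  split_ifs with h h2
  · exact Sym2.other_mem _
  · exact h2.choose_spec.1
  · exact Sym2.out_fst_mem e

/-- the holder never satisfies the "take your own vertex" branch. -/
lemma holder_not_branch1 {G : SimpleGraph V} {W : Set V} {r : V} {p : V → V}
    (hp : ∀ v ∉ W, G.dist (p v) r < G.dist v r) (e : Sym2 V) :
    ¬ (holder W p e ∉ W ∧ s(holder W p e, p (holder W p e)) = e) := by
  rw [holder]
  split_ifs with h h2
  · rintro ⟨hW, hs⟩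
    obtain ⟨hxW, hxs⟩ := h.choose_spec.choose_spec
    set x := h.choose with hx
    set hmem : x ∈ e := h.choose_spec.choose
    set o := Sym2.Mem.other hmem with ho
    have hspec : s(x, o) = e := Sym2.other_spec hmem
    have h1 : p x = o := by
      have : s(x, p x) = s(x, o) := by rw [hxs, hspec]
      exact Sym2.congr_right.mp this
    have h2 : p o = x := by
      have : s(o, p o) = s(o, x) := by rw [hs, ← hspec, Sym2.eq_swap]
      exact Sym2.congr_right.mp this
    have d1 := hp x hxW
    have d2 := hp o hW
    rw [h1] at d1; rw [h2] at d2; omega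
  · rintro ⟨hW, hs⟩
    exact h ⟨_, h2.choose_spec.1, hW, hs⟩
  · rintro ⟨hW, hs⟩
    exact h ⟨_, Sym2.out_fst_mem e, hW, hs⟩

/-- any endpoint of `e` lying in the independent set `W` is the holder. -/
lemma holder_of_mem_W {G : SimpleGraph V} {W : Set V}
    (hind : ∀ u ∈ W, ∀ v ∈ W, ¬ G.Adj u v) {p : V → V} {e : Sym2 V}
    (he : e ∈ G.edgeSet) {u : V} (hu : u ∈ e) (huW : u ∈ W) : holder W p e = u := by
  rw [holder]
  split_ifs with h h2
  · obtain ⟨hxW, hxs⟩ := h.choose_spec.choose_spec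
    set x := h.choose
    set hmem : x ∈ e := h.choose_spec.choose
    have hspec : s(x, Sym2.Mem.other hmem) = e := Sym2.other_spec hmem
    have hxu : x ≠ u := fun h' => hxW (h' ▸ huW)
    rw [← hspec] at hu
    rcases Sym2.mem_iff.mp hu with h' | h'
    · exact absurd h' hxu.symm
    · exact h'.symm
  · obtain ⟨hwmem, hwW⟩ := h2.choose_spec
    set w := h2.choose
    by_contra hne
    have hwu : w ≠ u := hne
    have : e = s(w, u) := (Sym2.mem_and_mem_iff hwu).mp ⟨hwmem, hu⟩
    have : G.Adj w u := by rwa [this] at he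
    exact hind w hwW u huW this
  · exact absurd ⟨u, hu, huW⟩ h2

end Stmt18Aux

/-- a singleton blocking coalition. -/
lemma Stmt18Aux.single_block {A B : Type*} (M : TwoCol A B) {τ : A → Option B}
    (hτ : M.IsMatching τ) (a : A) (b : B) (hb : b = M.h1 a ∨ b = M.h2 a)
    (hfree : ∀ a', τ a' ≠ some b) (hpref : M.PrefOpt a (some b) (τ a)) :
    M.IsBlocking τ {a} := by
  classical
  refine ⟨⟨a, rfl⟩, Function.update τ a (some b), ⟨?_, ?_⟩, ?_, ?_⟩
  · intro x c hc
    by_cases hx : x = a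
    · subst hx
      rw [Function.update_self] at hc
      obtain rfl : b = c := by injection hc
      exact hb
    · rw [Function.update_of_ne hx] at hc
      exact hτ.1 x c hc
  · intro x y c hx hy
    by_cases hxa : x = a <;> by_cases hya : y = a
    · rw [hxa, hya]
    · subst hxa
      rw [Function.update_self] at hx
      rw [Function.update_of_ne hya] at hy
      obtain rfl : b = c := by injection hx
      exact absurd hy (hfree y)
    · subst hya
      rw [Function.update_self] at hy
      rw [Function.update_of_ne hxa] at hx
      obtain rfl : b = c := by injection hy
      exact absurd hx (hfree x)
    · rw [Function.update_of_ne hxa] at hx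
      rw [Function.update_of_ne hya] at hy
      exact hτ.2 x y c hx hy
  · intro x hx
    exact Function.update_of_ne (by simpa using hx) _ _
  · intro x hx
    rw [Set.mem_singleton_iff] at hx; subst hx
    rw [Function.update_self]; exact hpref

/-- for a finite connected graph `G`, in the instance `M_G`:
every edge-house is in the image of every POM; for every POM the set of
vertex-houses not in the image is an independent set of `G`; and conversely
for every nonempty independent set `W` of `G` there is a POM whose image is
exactly the edges together with the vertices outside `W`. -/
theorem stmt18 {V : Type*} [Fintype V] [DecidableEq V]
    (G : SimpleGraph V) (hconn : G.Connected) :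
    (∀ τ, (graphInstance G).IsPOM τ →
      ∀ e : G.edgeSet, ∃ a, τ a = some (Sum.inl e)) ∧
    (∀ τ, (graphInstance G).IsPOM τ → ∀ u v : V,
      (¬ ∃ a, τ a = some (Sum.inr u)) → (¬ ∃ a, τ a = some (Sum.inr v)) →
      ¬ G.Adj u v) ∧
    (∀ W : Set V, W.Nonempty → (∀ u ∈ W, ∀ v ∈ W, ¬ G.Adj u v) →
      ∃ τ, (graphInstance G).IsPOM τ ∧
        (∀ e : G.edgeSet, ∃ a, τ a = some (Sum.inl e)) ∧
        ∀ v : V, v ∉ W ↔ ∃ a, τ a = some (Sum.inr v)) := by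

  classical
  refine ⟨?_, ?_, ?_⟩
  · -- part 1
    rintro τ ⟨hm, hpom⟩ e
    by_contra hne
    push_neg at hne
    set a : {p : Sym2 V × V // p.1 ∈ G.edgeSet ∧ p.2 ∈ p.1} :=
      ⟨(e.1, e.1.out.1), e.2, Sym2.out_fst_mem e.1⟩ with ha
    refine hpom {a} (Stmt18Aux.single_block _ hm a (Sum.inl e) (Or.inl rfl) hne (Or.inl ⟨rfl, hne a⟩))
  · -- part 2
    rintro τ ⟨hm, hpom⟩ u v hu hv hadj
    push_neg at hu hv
    have he : s(u, v) ∈ G.edgeSet := hadj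
    set a1 : {p : Sym2 V × V // p.1 ∈ G.edgeSet ∧ p.2 ∈ p.1} :=
      ⟨(s(u, v), u), he, Sym2.mem_mk_left u v⟩ with ha1
    set a2 : {p : Sym2 V × V // p.1 ∈ G.edgeSet ∧ p.2 ∈ p.1} :=
      ⟨(s(u, v), v), he, Sym2.mem_mk_right u v⟩ with ha2
    have key : ∀ a : {p : Sym2 V × V // p.1 ∈ G.edgeSet ∧ p.2 ∈ p.1},
        (∀ a', τ a' ≠ some (Sum.inr a.1.2)) →
        τ a ≠ some (Sum.inl (⟨a.1.1, a.2.1⟩ : G.edgeSet)) → False := by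
      intro a hfree hne
      have hnone : τ a = none := by
        cases h : τ a with
        | none => rfl
        | some b =>
          rcases hm.1 a b h with hb | hb
          · rw [hb] at h; exact absurd h hne
          · rw [hb] at h; exact absurd h (hfree a)
      refine hpom {a} (Stmt18Aux.single_block _ hm a (Sum.inr a.1.2) (Or.inr rfl) hfree
        (Or.inr ⟨rfl, hnone⟩))
    by_cases h1 : τ a1 = some (Sum.inl (⟨s(u, v), he⟩ : G.edgeSet))
    · refine key a2 hv ?_
      intro h2
      have : a1 = a2 := hm.2 a1 a2 _ h1 h2
      have : u = v := congrArg (fun x => x.1.2) this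
      exact hadj.ne this
    · exact key a1 hu h1
  · -- part 3
    rintro W ⟨r, hr⟩ hind
    have hpar : ∀ v ∉ W, G.Adj v (Stmt18Aux.par G r v) ∧
        G.dist (Stmt18Aux.par G r v) r < G.dist v r := by
      intro v hv
      exact Stmt18Aux.par_spec hconn (fun h => hv (h ▸ hr))
    set p := Stmt18Aux.par G r with hpdef
    have hdist : ∀ v ∉ W, G.dist (p v) r < G.dist v r := fun v hv => (hpar v hv).2
    set τ : {q : Sym2 V × V // q.1 ∈ G.edgeSet ∧ q.2 ∈ q.1} → Option (↥G.edgeSet ⊕ V) :=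
      fun a => if a.1.2 ∉ W ∧ s(a.1.2, p a.1.2) = a.1.1 then some (Sum.inr a.1.2)
        else if a.1.2 = Stmt18Aux.holder W p a.1.1 then some (Sum.inl ⟨a.1.1, a.2.1⟩) else none with hτ
    have F1 : ∀ (e : Sym2 V) (he : e ∈ G.edgeSet),
        τ ⟨(e, Stmt18Aux.holder W p e), he, Stmt18Aux.holder_mem W p e⟩ = some (Sum.inl ⟨e, he⟩) := by
      intro e he
      simp only [hτ]
      rw [if_neg (Stmt18Aux.holder_not_branch1 hdist e)]
      simp
    have hmatch : (graphInstance G).IsMatching τ := by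
      constructor
      · intro a b h
        simp only [hτ] at h
        split_ifs at h with h1 h2
        · right; exact (Option.some.inj h).symm
        · left; exact (Option.some.inj h).symm
      · intro a a' b h h'
        have unpack : ∀ x : {q : Sym2 V × V // q.1 ∈ G.edgeSet ∧ q.2 ∈ q.1}, τ x = some b →
            (b = Sum.inr x.1.2 ∧ x.1.2 ∉ W ∧ s(x.1.2, p x.1.2) = x.1.1) ∨
            (b = Sum.inl ⟨x.1.1, x.2.1⟩ ∧ x.1.2 = Stmt18Aux.holder W p x.1.1) := by
          intro x hx
          simp only [hτ] at hx
          split_ifs at hx with h1 h2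
          · exact Or.inl ⟨(Option.some.inj hx).symm, h1⟩
          · exact Or.inr ⟨(Option.some.inj hx).symm, h2⟩
        rcases unpack a h with ⟨hb, hw, hs⟩ | ⟨hb, hh⟩ <;>
          rcases unpack a' h' with ⟨hb', hw', hs'⟩ | ⟨hb', hh'⟩
        · have hv : a.1.2 = a'.1.2 := by rw [hb] at hb'; exact Sum.inr.inj hb'
          apply Subtype.ext; apply Prod.ext
          · rw [← hs, ← hs', hv]
          · exact hv
        · rw [hb] at hb'; cases hb'
        · rw [hb] at hb'; cases hb'
        · have he : a.1.1 = a'.1.1 := by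
            rw [hb] at hb'
            exact congrArg Subtype.val (Sum.inl.inj hb')
          apply Subtype.ext; apply Prod.ext
          · exact he
          · rw [hh, hh', he]
    have hP : (graphInstance G).IsPOM τ := by
      refine ⟨hmatch, ?_⟩
      rintro S ⟨hSne, τ', hτ'm, hout, himp⟩
      have stepA : ∀ a ∈ S, ∀ f : G.edgeSet, τ' a ≠ some (Sum.inl f) := by
        intro a haS f hf
        have hf1 : (Sum.inl f : ↥G.edgeSet ⊕ V) = Sum.inl (⟨a.1.1, a.2.1⟩ : G.edgeSet) := by
          rcases hτ'm.1 a _ hf with h | h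
          · exact h
          · simp [graphInstance] at h
        have hfa : f = ⟨a.1.1, a.2.1⟩ := Sum.inl.inj hf1
        subst hfa
        have hne : τ a ≠ some (Sum.inl (⟨a.1.1, a.2.1⟩ : G.edgeSet)) := by
          rcases himp a haS with ⟨_, hy⟩ | ⟨hx, _⟩
          · exact hy
          · rw [hf] at hx; simp [graphInstance] at hx
        have ha2 : τ ⟨(a.1.1, Stmt18Aux.holder W p a.1.1), a.2.1, Stmt18Aux.holder_mem W p a.1.1⟩ =
            some (Sum.inl ⟨a.1.1, a.2.1⟩) := F1 a.1.1 a.2.1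
        set a2 : {q : Sym2 V × V // q.1 ∈ G.edgeSet ∧ q.2 ∈ q.1} :=
          ⟨(a.1.1, Stmt18Aux.holder W p a.1.1), a.2.1, Stmt18Aux.holder_mem W p a.1.1⟩ with ha2def
        have ha2S : a2 ∉ S := by
          intro hmem
          rcases himp a2 hmem with ⟨_, hy⟩ | ⟨_, hy⟩
          · exact hy ha2
          · rw [ha2] at hy; simp at hy
        have heq : a = a2 := hτ'm.2 a a2 _ hf (by rw [hout a2 ha2S, ha2])
        exact hne (by rw [heq]; exact ha2)
      obtain ⟨a, haS⟩ := hSne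
      rcases himp a haS with ⟨h1, _⟩ | ⟨h1, h2⟩
      · exact stepA a haS ⟨a.1.1, a.2.1⟩ h1
      · have hmain : ¬(a.1.2 ∉ W ∧ s(a.1.2, p a.1.2) = a.1.1) ∧ a.1.2 ≠ Stmt18Aux.holder W p a.1.1 := by
          simp only [hτ] at h2
          split_ifs at h2 with c1 c2
          exact ⟨c1, c2⟩
        have hWa : a.1.2 ∉ W := by
          intro hWmem
          exact hmain.2 (Stmt18Aux.holder_of_mem_W hind a.2.1 a.2.2 hWmem).symm
        have he2 : s(a.1.2, p a.1.2) ∈ G.edgeSet := (hpar _ hWa).1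
        set a3 : {q : Sym2 V × V // q.1 ∈ G.edgeSet ∧ q.2 ∈ q.1} :=
          ⟨(s(a.1.2, p a.1.2), a.1.2), he2, Sym2.mem_mk_left _ _⟩ with ha3def
        have ha3 : τ a3 = some (Sum.inr a.1.2) := by
          simp only [hτ]
          simp [ha3def, hWa]
        have ha3S : a3 ∉ S := by
          intro hmem
          rcases himp a3 hmem with ⟨hh1, _⟩ | ⟨_, hh2⟩
          · exact stepA a3 hmem ⟨a3.1.1, a3.2.1⟩ hh1
          · rw [ha3] at hh2; simp at hh2
        have heq : a = a3 := hτ'm.2 a a3 (Sum.inr a.1.2) h1 (by rw [hout a3 ha3S, ha3])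
        rw [heq, ha3] at h2; simp at h2
    refine ⟨τ, hP, ?_, ?_⟩
    · intro e
      exact ⟨⟨(e.1, Stmt18Aux.holder W p e.1), e.2, Stmt18Aux.holder_mem W p e.1⟩, F1 e.1 e.2⟩
    · intro v
      constructor
      · intro hv
        refine ⟨⟨(s(v, p v), v), (hpar v hv).1, Sym2.mem_mk_left _ _⟩, ?_⟩
        simp only [hτ]
        simp [hv]
      · rintro ⟨a, ha⟩ hv
        simp only [hτ] at ha
        split_ifs at ha with c1 c2
        · exact c1.1 ((Sum.inr.inj (Option.some.inj ha)) ▸ hv)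
        all_goals simp at ha
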